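/- arXiv:2401.02185 — 2 statements merged into one kernel-verified Lean document; each statement's English description precedes it below -/
import Mathlib

section
/- For a nonempty subset Y of Ω_n = {1,...,n}, the semigroup POPI_n(Y) of injective orientation-preserving partial transformations with image contained in Y is a regular semigroup if and only if Y = Ω_n. -/
open scoped Classical

namespace POPIpaper

/-- Partial transformations of `Ω_n = {1,…,n}`, modelled on `Fin n`. -/
abbrev PT (n : ℕ) := Fin n → Option (Fin n)

/-- Composition of partial transformations (apply `α` first, then `β`). -/
def comp {n : ℕ} (α β : PT n) : PT n := fun x => (α x).bind β

/-- Domain of a partial transformation. -/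
noncomputable def dom {n : ℕ} (α : PT n) : Finset (Fin n) :=
  Finset.univ.filter (fun x => (α x).isSome)

/-- Image of a partial transformation. -/
noncomputable def im {n : ℕ} (α : PT n) : Finset (Fin n) :=
  Finset.univ.filter (fun y => ∃ x, α x = some y)

/-- rank(α) = |Im(α)|. -/
noncomputable def rank {n : ℕ} (α : PT n) : ℕ := (im α).card

/-- Injectivity of a partial transformation. -/
def Inj {n : ℕ} (α : PT n) : Prop :=
  ∀ x y z : Fin n, α x = some z → α y = some z → x = y

/-- Orientation-preserving: the sequence of images, taken along the increasing
enumeration of the domain, is cyclic, i.e. some rotation of it is sorted. -/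
def OP {n : ℕ} (α : PT n) : Prop :=
  ∃ k : ℕ, (((List.finRange n).filterMap α).rotate k).Pairwise (· ≤ ·)

/-- The semigroup `POPI_n(Y)` as a set of partial transformations:
injective, orientation-preserving, with image contained in `Y`. -/
def POPI (n : ℕ) (Y : Finset (Fin n)) : Set (PT n) :=
  {α | Inj α ∧ OP α ∧ ∀ x y : Fin n, α x = some y → y ∈ Y}

/-- Regularity of `α` as an element of the subsemigroup `S`. -/
def IsRegularIn {n : ℕ} (S : Set (PT n)) (α : PT n) : Prop :=
  ∃ β ∈ S, comp (comp α β) α = α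

/-- The partial identity on a subset `A`. -/
def idp {n : ℕ} (A : Finset (Fin n)) : PT n :=
  fun x => if x ∈ A then some x else none

/-- Fixed points of a partial transformation. -/
noncomputable def fix {n : ℕ} (α : PT n) : Finset (Fin n) :=
  Finset.univ.filter (fun x => α x = some x)

/-- Green's relation ℒ on the set `S`: `S¹α = S¹β`. -/
def LRel {n : ℕ} (S : Set (PT n)) (α β : PT n) : Prop :=
  (α = β ∨ ∃ γ ∈ S, comp γ β = α) ∧ (β = α ∨ ∃ γ ∈ S, comp γ α = β)

/-- Green's relation ℛ on the set `S`: `αS¹ = βS¹`. -/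
def RRel {n : ℕ} (S : Set (PT n)) (α β : PT n) : Prop :=
  (α = β ∨ ∃ γ ∈ S, comp β γ = α) ∧ (β = α ∨ ∃ γ ∈ S, comp α γ = β)

/-- Green's relation ℋ = ℒ ∩ ℛ. -/
def HRel {n : ℕ} (S : Set (PT n)) (α β : PT n) : Prop :=
  LRel S α β ∧ RRel S α β

/-- Green's relation 𝒟 = ℒ ∘ ℛ. -/
def DRel {n : ℕ} (S : Set (PT n)) (α β : PT n) : Prop :=
  ∃ γ ∈ S, LRel S α γ ∧ RRel S γ β

/-- `Φ` is a semigroup isomorphism from the subsemigroup `S` onto `T`. -/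
def IsIso {n : ℕ} (S T : Set (PT n)) (Φ : PT n → PT n) : Prop :=
  Set.BijOn Φ S T ∧ ∀ a ∈ S, ∀ b ∈ S, Φ (comp a b) = comp (Φ a) (Φ b)

/-- The product `β * l₁ * ⋯ * l_k` of a nonempty list of partial transformations. -/
def prodList {n : ℕ} (β : PT n) (l : List (PT n)) : PT n := l.foldl comp β

lemma filterMap_eq_map_filter {σ γ : Type*} [Inhabited γ] (f : σ → Option γ) (l : List σ) :
    l.filterMap f = (l.filter fun x => (f x).isSome).map fun x => (f x).get! := by
  induction l with
  | nil => simp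
  | cons a l ih =>
    cases h : f a <;> simp [List.filterMap_cons, List.filter_cons, h, ih]

/-- `POPI_n(Y)` is a regular semigroup iff `Y = Ω_n`. -/
theorem popi_regular_iff_univ {n : ℕ} (Y : Finset (Fin n)) (hY : Y.Nonempty) :
    (∀ α ∈ POPI n Y, IsRegularIn (POPI n Y) α) ↔ Y = Finset.univ := by
  obtain ⟨y₀, hy₀⟩ := hY
  constructor
  · intro hreg
    by_contra hne
    have hx : ∃ x, x ∉ Y := by
      by_contra h; push_neg at h
      exact hne (Finset.eq_univ_iff_forall.mpr h)
    obtain ⟨x₀, hx₀⟩ := hx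
    set α : PT n := fun z => if z = x₀ then some y₀ else none with hαdef
    have hαx : ∀ z y, α z = some y → z = x₀ ∧ y = y₀ := by
      intro z y hz
      simp only [hαdef] at hz
      split at hz
      · exact ⟨by assumption, by simpa using hz.symm⟩
      · exact absurd hz (by simp)
    have hα : α ∈ POPI n Y := by
      refine ⟨?_, ?_, ?_⟩
      · intro x y z hx hy
        rw [(hαx _ _ hx).1, (hαx _ _ hy).1]
      · refine ⟨0, ?_⟩
        rw [List.rotate_zero]
        apply List.pairwise_of_forall_mem_list
        intro a ha b hb
        rw [List.mem_filterMap] at ha hb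
        obtain ⟨_, _, ha⟩ := ha; obtain ⟨_, _, hb⟩ := hb
        rw [(hαx _ _ ha).2, (hαx _ _ hb).2]
      · intro x y hxy
        rw [(hαx _ _ hxy).2]; exact hy₀
    obtain ⟨β, hβ, hcomp⟩ := hreg α hα
    have h1 : α x₀ = some y₀ := by simp [hαdef]
    have h2 := congrFun hcomp x₀
    simp only [comp, h1, Option.bind_some] at h2
    cases hb : β y₀ with
    | none => rw [hb] at h2; simp at h2
    | some z =>
      rw [hb, Option.bind_some] at h2
      have hz : z = x₀ := (hαx _ _ h2).1
      exact hx₀ (hβ.2.2 y₀ x₀ (hz ▸ hb))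
  · rintro rfl α hα
    haveI : Inhabited (Fin n) := ⟨y₀⟩
    obtain ⟨hinj, ⟨k, hk⟩, -⟩ := hα
    set β : PT n := fun y => if h : ∃ x, α x = some y then some h.choose else none with hβdef
    have hβα : ∀ y x, β y = some x → α x = some y := by
      intro y x hxy
      simp only [hβdef] at hxy
      split at hxy
      · rename_i h
        obtain rfl : h.choose = x := by simpa using hxy
        exact h.choose_spec
      · exact absurd hxy (by simp)
    have hαβ : ∀ x y, α x = some y → β y = some x := by
      intro x y hxy
      have h : ∃ x, α x = some y := ⟨x, hxy⟩
      simp only [hβdef, dif_pos h]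
      exact congrArg some (hinj _ _ _ h.choose_spec hxy)
    have hβsome : ∀ y, (β y).isSome ↔ ∃ x, α x = some y := by
      intro y
      constructor
      · intro h
        obtain ⟨x, hx⟩ := Option.isSome_iff_exists.mp h
        exact ⟨x, hβα y x hx⟩
      · intro h
        rw [(hαβ _ _ h.choose_spec : β y = some h.choose)]; rfl
    refine ⟨β, ⟨?_, ?_, fun x y _ => Finset.mem_univ y⟩, ?_⟩
    · intro y₁ y₂ x h1 h2
      have := hβα _ _ h1
      rw [hβα _ _ h2] at this
      exact (Option.some.inj this).symm
    · -- OP β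
      set L := List.finRange n with hL
      set f : Fin n → Fin n := fun x => (α x).get! with hf
      set g : Fin n → Fin n := fun y => (β y).get! with hg
      set dα := L.filter (fun x => (α x).isSome) with hdα
      set dβ := L.filter (fun y => (β y).isSome) with hdβ
      have hiα : L.filterMap α = dα.map f := filterMap_eq_map_filter α L
      have hiβ : L.filterMap β = dβ.map g := filterMap_eq_map_filter β L
      have hfmem : ∀ x ∈ dα, α x = some (f x) := by
        intro x hx
        rw [hdα, List.mem_filter] at hx
        obtain ⟨z, hz⟩ := Option.isSome_iff_exists.mp hx.2
        simp [hf, hz]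
      have hsorted_dα : List.Pairwise (· ≤ ·) dα :=
        ((List.pairwise_lt_finRange n).filter _).imp le_of_lt
      have hsorted_dβ : List.Pairwise (· ≤ ·) dβ :=
        ((List.pairwise_lt_finRange n).filter _).imp le_of_lt
      have hnd_dβ : dβ.Nodup := (List.nodup_finRange n).filter _
      have hnd_iα : (L.filterMap α).Nodup := by
        refine List.Nodup.filterMap ?_ (List.nodup_finRange n)
        intro a a' b hb hb'
        exact hinj a a' b hb hb'
      have hmemiff : ∀ y, y ∈ dβ ↔ y ∈ (L.filterMap α).rotate k := by
        intro y
        rw [List.mem_rotate, List.mem_filterMap, hdβ, List.mem_filter]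
        constructor
        · rintro ⟨-, hx⟩
          obtain ⟨x, hx⟩ := (hβsome y).mp hx
          exact ⟨x, List.mem_finRange x, hx⟩
        · rintro ⟨x, -, hx⟩
          exact ⟨List.mem_finRange y, (hβsome y).mpr ⟨x, hx⟩⟩
      have hperm : List.Perm dβ ((L.filterMap α).rotate k) :=
        (List.perm_ext_iff_of_nodup hnd_dβ (List.nodup_rotate.mpr hnd_iα)).mpr hmemiff
      have hdβ_eq : dβ = (L.filterMap α).rotate k :=
        List.Perm.eq_of_pairwise' hsorted_dβ hk hperm
      have hkey : L.filterMap β = dα.rotate k := by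
        rw [hiβ, hdβ_eq, hiα, List.map_rotate, List.map_map]
        congr 1
        rw [show dα.map (g ∘ f) = dα.map id from ?_, List.map_id]
        apply List.map_congr_left
        intro x hx
        have h1 : α x = some (f x) := hfmem x hx
        have h2 : β (f x) = some x := hαβ _ _ h1
        simp [Function.comp, hg, h2]
      rcases Nat.eq_zero_or_pos dα.length with h0 | hpos
      · refine ⟨0, ?_⟩
        rw [hkey, List.length_eq_zero_iff.mp h0]
        simp
      · refine ⟨dα.length - k % dα.length, ?_⟩
        rw [hkey, List.rotate_rotate]
        have hlt : k % dα.length < dα.length := Nat.mod_lt _ hpos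
        have hmod := Nat.mod_add_div k dα.length
        have h3 : k + (dα.length - k % dα.length) = dα.length * (k / dα.length) + dα.length := by
          omega
        rw [h3, show dα.length * (k / dα.length) + dα.length
              = dα.length * (k / dα.length + 1) by ring, List.rotate_length_mul]
        exact hsorted_dα
    · funext x
      cases hx : α x with
      | none => simp [comp, hx]
      | some y =>
        simp only [comp, hx, Option.bind_some]
        rw [hαβ _ _ hx, Option.bind_some, hx]


end POPIpaper
end

section
/- Let α, β ∈ POPI_n(Y). Then (α, β) ∈ 𝒟 (Green's D-relation on POPI_n(Y)) if and only if either both α and β are regular and rank(α) = rank(β), or both α and β are not regular and Dom(α) = Dom(β). -/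
open scoped Classical

namespace POPIpaper

section Aux
variable {n : ℕ}

lemma mem_dom {α : PT n} {x : Fin n} : x ∈ dom α ↔ (α x).isSome := by
  simp [dom]

lemma mem_dom' {α : PT n} {x : Fin n} : x ∈ dom α ↔ ∃ y, α x = some y := by
  simp [dom, Option.isSome_iff_exists]

lemma mem_im {α : PT n} {y : Fin n} : y ∈ im α ↔ ∃ x, α x = some y := by
  simp [im]

lemma filterMap_eq [Inhabited (Fin n)] (α : PT n) (l : List (Fin n)) :
    l.filterMap α = (l.filter (fun x => (α x).isSome)).map (fun x => (α x).iget) := by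
  induction l with
  | nil => rfl
  | cons a l ih =>
    cases ha : α a with
    | none => simp [List.filterMap_cons, List.filter_cons, ha, ih]
    | some y => simp [List.filterMap_cons, List.filter_cons, ha, ih]

lemma eq_sort_of {A : Finset (Fin n)} {l : List (Fin n)} (hs : l.Pairwise (· ≤ ·))
    (hn : l.Nodup) (ht : ∀ x, x ∈ l ↔ x ∈ A) : l = A.sort (· ≤ ·) := by
  apply List.Perm.eq_of_pairwise' hs (Finset.pairwise_sort _ _)
  rw [List.perm_ext_iff_of_nodup hn (Finset.sort_nodup _ _)]
  intro a; rw [Finset.mem_sort]; exact ht a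

lemma filter_finRange (α : PT n) :
    (List.finRange n).filter (fun x => (α x).isSome) = (dom α).sort (· ≤ ·) := by
  apply eq_sort_of
  · exact ((List.pairwise_lt_finRange n).imp le_of_lt).filter _
  · exact (List.nodup_finRange n).filter _
  · intro x; simp [List.mem_filter, mem_dom]

lemma Lst_eq [Inhabited (Fin n)] (α : PT n) :
    (List.finRange n).filterMap α
      = ((dom α).sort (· ≤ ·)).map (fun x => (α x).iget) := by
  rw [filterMap_eq, filter_finRange]

lemma some_iget {α : PT n} {x : Fin n} [Inhabited (Fin n)] (h : x ∈ dom α) :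
    α x = some ((α x).iget) := by
  obtain ⟨y, hy⟩ := mem_dom'.mp h
  simp [hy]

lemma Lst_nodup [Inhabited (Fin n)] {α : PT n} (hα : Inj α) :
    ((List.finRange n).filterMap α).Nodup := by
  rw [Lst_eq]
  apply List.Nodup.map_on _ (Finset.sort_nodup _ _)
  intro x hx y hy hxy
  rw [Finset.mem_sort] at hx hy
  exact hα x y _ (some_iget hx) (hxy ▸ some_iget hy)

lemma Lst_toFinset (α : PT n) : ((List.finRange n).filterMap α).toFinset = im α := by
  ext y
  simp [List.mem_filterMap, mem_im, List.mem_finRange]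

lemma rank_eq_card_dom [Inhabited (Fin n)] {α : PT n} (hα : Inj α) :
    rank α = (dom α).card := by
  have h1 : (im α).card = ((List.finRange n).filterMap α).length := by
    rw [← Lst_toFinset]
    exact List.toFinset_card_of_nodup (Lst_nodup hα)
  rw [rank, h1, Lst_eq, List.length_map, Finset.length_sort]

lemma op_of_rotate {l l' : List (Fin n)} (k : ℕ) (h : l' = l.rotate k)
    (hop : ∃ m, (l.rotate m).Pairwise (· ≤ ·)) : ∃ m, (l'.rotate m).Pairwise (· ≤ ·) := by
  obtain ⟨m, hm⟩ := hop
  have hr : l ~r l' := ⟨k, h.symm⟩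
  obtain ⟨j, hj⟩ := hr.symm
  exact ⟨j + m, by rw [← List.rotate_rotate, hj]; exact hm⟩

end Aux

section Aux2
variable {n : ℕ}

/-- The "relabelling" `β ∘ α⁻¹`, a partial map with domain `im α`. -/
noncomputable def ginv (α β : PT n) : PT n :=
  fun y => if h : ∃ x, α x = some y then β h.choose else none

lemma ginv_eval {α β : PT n} (hα : Inj α) {x y : Fin n} (hxy : α x = some y) :
    ginv α β y = β x := by
  have h : ∃ x, α x = some y := ⟨x, hxy⟩
  simp only [ginv, dif_pos h]
  congr 1
  exact hα _ _ _ h.choose_spec hxy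

lemma ginv_none {α β : PT n} {y : Fin n} (h : ¬ ∃ x, α x = some y) :
    ginv α β y = none := by
  simp only [ginv, dif_neg h]

lemma ginv_some {α β : PT n} {y z : Fin n} (h : ginv α β y = some z) :
    ∃ x, α x = some y ∧ β x = some z := by
  by_cases hy : ∃ x, α x = some y
  · exact ⟨hy.choose, hy.choose_spec, by simpa only [ginv, dif_pos hy] using h⟩
  · simp only [ginv, dif_neg hy] at h
    exact absurd h (by simp)

lemma comp_ginv {α β : PT n} (hα : Inj α) (hd : dom α = dom β) :
    comp α (ginv α β) = β := by
  funext x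
  cases hx : α x with
  | none =>
    have h1 : x ∉ dom β := by rw [← hd]; simp [mem_dom, hx]
    rw [mem_dom'] at h1
    push_neg at h1
    simp only [comp, hx, Option.bind_none]
    cases hb : β x with
    | none => rfl
    | some z => exact absurd hb (h1 z)
  | some y =>
    simp only [comp, hx, Option.bind_some]
    exact ginv_eval hα hx

lemma dom_ginv {α β : PT n} (hα : Inj α) (hd : dom α = dom β) :
    dom (ginv α β) = im α := by
  ext y
  rw [mem_dom', mem_im]
  constructor
  · rintro ⟨z, hz⟩
    obtain ⟨x, hx, _⟩ := ginv_some hz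
    exact ⟨x, hx⟩
  · rintro ⟨x, hx⟩
    have hxd : x ∈ dom β := by rw [← hd]; exact mem_dom'.mpr ⟨y, hx⟩
    obtain ⟨z, hz⟩ := mem_dom'.mp hxd
    exact ⟨z, by rw [ginv_eval hα hx, hz]⟩

lemma im_ginv {α β : PT n} (hα : Inj α) (hd : dom α = dom β) :
    im (ginv α β) = im β := by
  ext z
  rw [mem_im, mem_im]
  constructor
  · rintro ⟨y, hy⟩
    obtain ⟨x, _, hb⟩ := ginv_some hy
    exact ⟨x, hb⟩
  · rintro ⟨x, hx⟩
    have hxd : x ∈ dom α := by rw [hd]; exact mem_dom'.mpr ⟨z, hx⟩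
    obtain ⟨y, hy⟩ := mem_dom'.mp hxd
    exact ⟨y, by rw [ginv_eval hα hy, hx]⟩

lemma ginv_mem [Inhabited (Fin n)] {Y : Finset (Fin n)} {α β : PT n}
    (hα : α ∈ POPI n Y) (hβ : β ∈ POPI n Y) (hd : dom α = dom β) :
    ginv α β ∈ POPI n Y := by
  obtain ⟨hαi, hαo, hαY⟩ := hα
  obtain ⟨hβi, hβo, hβY⟩ := hβ
  refine ⟨?_, ?_, ?_⟩
  · intro y₁ y₂ z h1 h2
    obtain ⟨x₁, hx₁, hb₁⟩ := ginv_some h1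
    obtain ⟨x₂, hx₂, hb₂⟩ := ginv_some h2
    have hx : x₁ = x₂ := hβi _ _ _ hb₁ hb₂
    rw [hx, hx₂] at hx₁
    exact (Option.some_injective _ hx₁).symm
  · obtain ⟨k, hk⟩ := hαo
    apply op_of_rotate k ?_ hβo
    have hds : (dom (ginv α β)).sort (· ≤ ·)
        = ((List.finRange n).filterMap α).rotate k := by
      rw [dom_ginv hαi hd]
      refine (eq_sort_of hk (List.nodup_rotate.mpr (Lst_nodup hαi)) ?_).symm
      intro x
      rw [List.mem_rotate, ← Lst_toFinset α, List.mem_toFinset]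
    rw [Lst_eq (ginv α β), hds, Lst_eq α, ← List.map_rotate, List.map_map]
    have hcongr : ∀ x ∈ (((dom α).sort (· ≤ ·)).rotate k),
        ((fun y => (ginv α β y).iget) ∘ fun x => (α x).iget) x = (β x).iget := by
      intro x hx
      rw [List.mem_rotate, Finset.mem_sort] at hx
      have hax : α x = some ((α x).iget) := some_iget hx
      simp only [Function.comp_apply]
      rw [ginv_eval hαi hax]
    rw [List.map_congr_left hcongr, List.map_rotate]
    have : dom α = dom β := hd
    rw [this, ← Lst_eq β]
  · intro y z h
    obtain ⟨x, _, hb⟩ := ginv_some h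
    exact hβY _ _ hb

end Aux2

section Aux3
variable {n : ℕ}

lemma idp_some {A : Finset (Fin n)} {x y : Fin n} (h : idp A x = some y) :
    x = y ∧ x ∈ A := by
  by_cases hx : x ∈ A
  · simp only [idp, if_pos hx] at h
    exact ⟨Option.some_injective _ h, hx⟩
  · simp [idp, if_neg hx] at h

lemma dom_idp (A : Finset (Fin n)) : dom (idp A) = A := by
  ext x
  rw [mem_dom']
  constructor
  · rintro ⟨y, hy⟩; exact (idp_some hy).2
  · intro hx; exact ⟨x, by simp [idp, if_pos hx]⟩

lemma idp_mem [Inhabited (Fin n)] {Y A : Finset (Fin n)} (h : A ⊆ Y) :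
    idp A ∈ POPI n Y := by
  refine ⟨?_, ?_, ?_⟩
  · intro x y z hx hy
    obtain ⟨rfl, -⟩ := idp_some hx
    obtain ⟨rfl, -⟩ := idp_some hy
    rfl
  · refine ⟨0, ?_⟩
    rw [List.rotate_zero, Lst_eq, dom_idp]
    have : ∀ x ∈ A.sort (· ≤ ·), (idp A x).iget = x := by
      intro x hx
      rw [Finset.mem_sort] at hx
      simp [idp, if_pos hx]
    rw [List.map_congr_left this, List.map_id']
    exact Finset.pairwise_sort _ _
  · intro x y hxy
    obtain ⟨rfl, hx⟩ := idp_some hxy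
    exact h hx

lemma comp_idp_dom (α : PT n) : comp (idp (dom α)) α = α := by
  funext x
  by_cases hx : x ∈ dom α
  · simp [comp, idp, if_pos hx]
  · have hnone : α x = none := by
      cases ha : α x with
      | none => rfl
      | some y => exact absurd (mem_dom'.mpr ⟨y, ha⟩) hx
    simp [comp, idp, if_neg hx, hnone]

lemma regular_iff [Inhabited (Fin n)] {Y : Finset (Fin n)} {α : PT n}
    (hα : α ∈ POPI n Y) : IsRegularIn (POPI n Y) α ↔ dom α ⊆ Y := by
  constructor
  · rintro ⟨β, hβS, hβ⟩
    intro x hx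
    obtain ⟨y, hy⟩ := mem_dom'.mp hx
    have h1 : comp (comp α β) α x = some y := by rw [hβ, hy]
    simp only [comp, hy, Option.bind_some] at h1
    obtain ⟨z, hz, haz⟩ := Option.bind_eq_some_iff.mp h1
    have : z = x := hα.1 z x y haz hy
    rw [this] at hz
    exact hβS.2.2 _ _ hz
  · intro hsub
    have hidp : idp (dom α) ∈ POPI n Y := idp_mem hsub
    have hd : dom α = dom (idp (dom α)) := (dom_idp _).symm
    refine ⟨ginv α (idp (dom α)), ginv_mem hα hidp hd, ?_⟩
    rw [comp_ginv hα.1 hd, comp_idp_dom]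

end Aux3

section Aux4
variable {n : ℕ}

/-- The increasing bijection from `A` onto `B` (when `A.card = B.card`),
as a partial transformation. -/
noncomputable def ob (A B : Finset (Fin n)) : PT n :=
  fun x => (B.sort (· ≤ ·))[(A.sort (· ≤ ·)).idxOf x]?

lemma ob_apply_mem {A B : Finset (Fin n)} (hc : A.card = B.card) {x : Fin n}
    (hx : x ∈ A) : ∃ h : (A.sort (· ≤ ·)).idxOf x < (B.sort (· ≤ ·)).length,
      ob A B x = some ((B.sort (· ≤ ·))[(A.sort (· ≤ ·)).idxOf x]) := by
  have hlt : (A.sort (· ≤ ·)).idxOf x < (B.sort (· ≤ ·)).length := by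
    rw [Finset.length_sort, ← hc, ← Finset.length_sort (· ≤ ·) (s := A)]
    exact List.idxOf_lt_length_iff.mpr (by rwa [Finset.mem_sort])
  exact ⟨hlt, List.getElem?_eq_getElem hlt⟩

lemma ob_apply_not_mem {A B : Finset (Fin n)} (hc : A.card = B.card) {x : Fin n}
    (hx : x ∉ A) : ob A B x = none := by
  have h1 : (A.sort (· ≤ ·)).idxOf x = (A.sort (· ≤ ·)).length :=
    List.idxOf_eq_length_iff.mpr (by rwa [Finset.mem_sort])
  apply List.getElem?_eq_none
  rw [h1, Finset.length_sort, Finset.length_sort, hc]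

lemma ob_some {A B : Finset (Fin n)} (hc : A.card = B.card) {x y : Fin n}
    (h : ob A B x = some y) :
    ∃ (i : ℕ) (hiA : i < (A.sort (· ≤ ·)).length) (hiB : i < (B.sort (· ≤ ·)).length),
      x = (A.sort (· ≤ ·))[i] ∧ y = (B.sort (· ≤ ·))[i] := by
  by_cases hx : x ∈ A
  · obtain ⟨hlt, he⟩ := ob_apply_mem hc hx
    rw [he] at h
    refine ⟨(A.sort (· ≤ ·)).idxOf x, ?_, hlt, ?_, (Option.some_injective _ h).symm⟩
    · exact List.idxOf_lt_length_iff.mpr (by rwa [Finset.mem_sort])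
    · exact (List.getElem_idxOf _).symm
  · rw [ob_apply_not_mem hc hx] at h
    exact absurd h (by simp)

lemma dom_ob {A B : Finset (Fin n)} (hc : A.card = B.card) : dom (ob A B) = A := by
  ext x
  rw [mem_dom']
  constructor
  · rintro ⟨y, hy⟩
    by_contra hx
    rw [ob_apply_not_mem hc hx] at hy
    exact absurd hy (by simp)
  · intro hx
    obtain ⟨_, he⟩ := ob_apply_mem hc hx
    exact ⟨_, he⟩

lemma im_ob {A B : Finset (Fin n)} (hc : A.card = B.card) : im (ob A B) = B := by
  ext y
  rw [mem_im]
  constructor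
  · rintro ⟨x, hx⟩
    obtain ⟨i, hiA, hiB, -, rfl⟩ := ob_some hc hx
    rw [← Finset.mem_sort (· ≤ ·)]
    exact List.getElem_mem _
  · intro hy
    rw [← Finset.mem_sort (· ≤ ·)] at hy
    obtain ⟨i, hi, hiy⟩ := List.getElem_of_mem hy
    have hiA : i < (A.sort (· ≤ ·)).length := by
      rwa [Finset.length_sort, hc, ← Finset.length_sort (· ≤ ·)]
    refine ⟨(A.sort (· ≤ ·))[i], ?_⟩
    have hidx : (A.sort (· ≤ ·)).idxOf ((A.sort (· ≤ ·))[i]) = i :=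
      List.Nodup.idxOf_getElem (Finset.sort_nodup _ _) _ _
    show (B.sort (· ≤ ·))[(A.sort (· ≤ ·)).idxOf _]? = some y
    rw [hidx, List.getElem?_eq_getElem hi, hiy]

lemma inj_ob {A B : Finset (Fin n)} (hc : A.card = B.card) : Inj (ob A B) := by
  intro x y z hx hy
  obtain ⟨i, hiA, hiB, rfl, hz1⟩ := ob_some hc hx
  obtain ⟨j, hjA, hjB, rfl, hz2⟩ := ob_some hc hy
  have : i = j := by
    apply (List.Nodup.getElem_inj_iff (Finset.sort_nodup B (· ≤ ·))).mp
    rw [← hz1, ← hz2]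
  subst this
  rfl

lemma Lst_ob [Inhabited (Fin n)] {A B : Finset (Fin n)} (hc : A.card = B.card) :
    (List.finRange n).filterMap (ob A B) = B.sort (· ≤ ·) := by
  rw [Lst_eq, dom_ob hc]
  apply List.ext_getElem
  · rw [List.length_map, Finset.length_sort, Finset.length_sort, hc]
  · intro i h1 h2
    rw [List.getElem_map]
    have hiA : i < (A.sort (· ≤ ·)).length := by rwa [List.length_map] at h1
    have hx : (A.sort (· ≤ ·))[i] ∈ A := by
      rw [← Finset.mem_sort (· ≤ ·)]; exact List.getElem_mem _
    obtain ⟨hlt, he⟩ := ob_apply_mem hc hx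
    rw [he]
    have hidx : (A.sort (· ≤ ·)).idxOf ((A.sort (· ≤ ·))[i]) = i :=
      List.Nodup.idxOf_getElem (Finset.sort_nodup _ _) _ _
    simp only [hidx] at he ⊢

lemma ob_mem [Inhabited (Fin n)] {Y A B : Finset (Fin n)} (hc : A.card = B.card)
    (hB : B ⊆ Y) : ob A B ∈ POPI n Y := by
  refine ⟨inj_ob hc, ⟨0, ?_⟩, ?_⟩
  · rw [List.rotate_zero, Lst_ob hc]
    exact Finset.pairwise_sort _ _
  · intro x y hxy
    apply hB
    rw [← im_ob hc, mem_im]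
    exact ⟨x, hxy⟩

end Aux4


section Aux5
variable {n : ℕ}

lemma dom_comp_subset (α γ : PT n) : dom (comp α γ) ⊆ dom α := by
  intro x hx
  obtain ⟨y, hy⟩ := mem_dom'.mp hx
  simp only [comp] at hy
  obtain ⟨z, hz, -⟩ := Option.bind_eq_some_iff.mp hy
  exact mem_dom'.mpr ⟨z, hz⟩

lemma im_comp_subset (α γ : PT n) : im (comp α γ) ⊆ im γ := by
  intro y hy
  obtain ⟨x, hx⟩ := mem_im.mp hy
  simp only [comp] at hx
  obtain ⟨z, -, hz⟩ := Option.bind_eq_some_iff.mp hx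
  exact mem_im.mpr ⟨z, hz⟩

lemma rrel_of_dom_eq [Inhabited (Fin n)] {Y : Finset (Fin n)} {α β : PT n}
    (hα : α ∈ POPI n Y) (hβ : β ∈ POPI n Y) (hd : dom α = dom β) :
    RRel (POPI n Y) α β :=
  ⟨Or.inr ⟨ginv β α, ginv_mem hβ hα hd.symm, comp_ginv hβ.1 hd.symm⟩,
   Or.inr ⟨ginv α β, ginv_mem hα hβ hd, comp_ginv hα.1 hd⟩⟩

lemma lrel_aux [Inhabited (Fin n)] {Y : Finset (Fin n)} {α γ : PT n}
    (hα : α ∈ POPI n Y) (hγ : γ ∈ POPI n Y)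
    (hαY : dom α ⊆ Y) (hγY : dom γ ⊆ Y) (him : im α = im γ) :
    ∃ δ ∈ POPI n Y, comp δ γ = α := by
  set ia := ginv α (idp (dom α)) with hia
  set ic := ginv γ (idp (dom γ)) with hic
  have hiaS : ia ∈ POPI n Y := ginv_mem hα (idp_mem hαY) (dom_idp _).symm
  have hicS : ic ∈ POPI n Y := ginv_mem hγ (idp_mem hγY) (dom_idp _).symm
  have hdia : dom ia = im α := dom_ginv hα.1 (dom_idp _).symm
  have hdic : dom ic = im γ := dom_ginv hγ.1 (dom_idp _).symm
  refine ⟨ginv ia ic, ginv_mem hiaS hicS (by rw [hdia, hdic, him]), ?_⟩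
  funext x
  cases hx : α x with
  | some v =>
    have hiav : ia v = some x := by
      rw [hia, ginv_eval hα.1 hx]
      simp [idp, if_pos (mem_dom'.mpr ⟨v, hx⟩)]
    have hvim : v ∈ im γ := him ▸ mem_im.mpr ⟨x, hx⟩
    obtain ⟨u, hu⟩ := mem_im.mp hvim
    have hicv : ic v = some u := by
      rw [hic, ginv_eval hγ.1 hu]
      simp [idp, if_pos (mem_dom'.mpr ⟨v, hu⟩)]
    have hδ : ginv ia ic x = some u := by rw [ginv_eval hiaS.1 hiav, hicv]
    simp only [comp, hδ, Option.bind_some]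
    rw [hu]
  | none =>
    have hδ : ginv ia ic x = none := by
      apply ginv_none
      rintro ⟨z, hz⟩
      obtain ⟨w, hw1, hw2⟩ := ginv_some hz
      obtain ⟨rfl, -⟩ := idp_some hw2
      rw [hx] at hw1
      exact absurd hw1 (by simp)
    simp [comp, hδ, hx]

lemma reg_transfer [Inhabited (Fin n)] {Y : Finset (Fin n)} {α γ δ : PT n}
    (hδ : δ ∈ POPI n Y) (hγi : Inj γ) (h : comp δ α = γ)
    (hcard : (dom α).card ≤ (dom γ).card) : dom α ⊆ Y := by
  have key : (dom γ).card ≤ ((dom α) ∩ Y).card := by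
    apply Finset.card_le_card_of_injOn (fun y => (δ y).iget)
    · intro y hy
      obtain ⟨w, hw⟩ := mem_dom'.mp hy
      rw [← h] at hw
      simp only [comp] at hw
      obtain ⟨z, hz, haz⟩ := Option.bind_eq_some_iff.mp hw
      have hz' : (δ y).iget = z := by simp [hz]
      show (δ y).iget ∈ dom α ∩ Y
      rw [Finset.mem_inter, hz']
      exact ⟨mem_dom'.mpr ⟨w, haz⟩, hδ.2.2 _ _ hz⟩
    · intro y1 hy1 y2 hy2 heq
      simp only [Finset.mem_coe] at hy1 hy2
      obtain ⟨w1, hw1⟩ := mem_dom'.mp hy1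
      obtain ⟨w2, hw2⟩ := mem_dom'.mp hy2
      have hw1' := hw1
      have hw2' := hw2
      rw [← h] at hw1 hw2
      simp only [comp] at hw1 hw2
      obtain ⟨z1, hz1, ha1⟩ := Option.bind_eq_some_iff.mp hw1
      obtain ⟨z2, hz2, ha2⟩ := Option.bind_eq_some_iff.mp hw2
      simp only [hz1, hz2, Option.iget_some] at heq
      subst heq
      have hww : w1 = w2 := Option.some_injective _ (ha1.symm.trans ha2)
      rw [hww] at hw1'
      exact hγi y1 y2 w2 hw1' hw2'
  have h2 : dom α ∩ Y = dom α := by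
    apply Finset.eq_of_subset_of_card_le Finset.inter_subset_left
    exact le_trans hcard key
  rw [← Finset.inter_eq_left]
  exact h2

end Aux5

/-- Green's 𝒟 on `POPI_n(Y)`. -/
theorem green_D {n : ℕ} (Y : Finset (Fin n)) (hY : Y.Nonempty)
    (α β : PT n) (hα : α ∈ POPI n Y) (hβ : β ∈ POPI n Y) :
    DRel (POPI n Y) α β ↔
      (IsRegularIn (POPI n Y) α ∧ IsRegularIn (POPI n Y) β ∧ rank α = rank β) ∨
      (¬ IsRegularIn (POPI n Y) α ∧ ¬ IsRegularIn (POPI n Y) β ∧ dom α = dom β) := by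
  haveI : Inhabited (Fin n) := ⟨hY.choose⟩
  constructor
  · rintro ⟨γ, hγS, hL, hR⟩
    have hdγβ : dom γ = dom β := by
      rcases hR with ⟨h1, h2⟩
      rcases h1 with rfl | ⟨δ, hδS, hδ⟩
      · rfl
      rcases h2 with heq | ⟨δ', hδ'S, hδ'⟩
      · exact heq.symm ▸ rfl
      apply Finset.Subset.antisymm
      · rw [← hδ]; exact dom_comp_subset β δ
      · rw [← hδ']; exact dom_comp_subset γ δ'
    rcases hL with ⟨hl1, hl2⟩
    by_cases he : α = γ
    · subst he
      by_cases hreg : IsRegularIn (POPI n Y) α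
      · left
        have hsub : dom α ⊆ Y := (regular_iff hα).mp hreg
        refine ⟨hreg, (regular_iff hβ).mpr ?_, ?_⟩
        · rw [← hdγβ]; exact hsub
        · rw [rank_eq_card_dom hα.1, rank_eq_card_dom hβ.1, hdγβ]
      · right
        refine ⟨hreg, ?_, hdγβ⟩
        intro hregβ
        apply hreg
        rw [regular_iff hα, hdγβ]
        exact (regular_iff hβ).mp hregβ
    · left
      rcases hl1 with rfl | ⟨δ, hδS, hδ⟩
      · exact absurd rfl he
      rcases hl2 with heq | ⟨δ', hδ'S, hδ'⟩
      · exact absurd heq.symm he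
      have him : im α = im γ := by
        apply Finset.Subset.antisymm
        · rw [← hδ]; exact im_comp_subset δ γ
        · rw [← hδ']; exact im_comp_subset δ' α
      have hrank : rank α = rank γ := by rw [rank, rank, him]
      have hrγβ : rank γ = rank β := by
        rw [rank_eq_card_dom hγS.1, rank_eq_card_dom hβ.1, hdγβ]
      have hcards : (dom α).card = (dom γ).card := by
        rw [← rank_eq_card_dom hα.1, ← rank_eq_card_dom hγS.1, hrank]
      have hαY : dom α ⊆ Y := reg_transfer hδ'S hγS.1 hδ' hcards.le
      have hγY : dom γ ⊆ Y := reg_transfer hδS hα.1 hδ hcards.ge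
      refine ⟨(regular_iff hα).mpr hαY, (regular_iff hβ).mpr ?_, ?_⟩
      · rw [← hdγβ]; exact hγY
      · rw [hrank, hrγβ]
  · rintro (⟨hrα, hrβ, hrank⟩ | ⟨hnα, hnβ, hdom⟩)
    · have hαY := (regular_iff hα).mp hrα
      have hβY := (regular_iff hβ).mp hrβ
      have hc : (dom β).card = (im α).card := by
        rw [← rank_eq_card_dom hβ.1, ← hrank]; rfl
      have himαY : im α ⊆ Y := fun y hy => by
        obtain ⟨x, hx⟩ := mem_im.mp hy
        exact hα.2.2 _ _ hx
      have hγS : ob (dom β) (im α) ∈ POPI n Y := ob_mem hc himαY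
      have hdγ : dom (ob (dom β) (im α)) = dom β := dom_ob hc
      have hiγ : im (ob (dom β) (im α)) = im α := im_ob hc
      have hγY : dom (ob (dom β) (im α)) ⊆ Y := by rw [hdγ]; exact hβY
      refine ⟨ob (dom β) (im α), hγS, ?_, rrel_of_dom_eq hγS hβ hdγ⟩
      exact ⟨Or.inr (lrel_aux hα hγS hαY hγY hiγ.symm),
             Or.inr (lrel_aux hγS hα hγY hαY hiγ)⟩
    · exact ⟨α, hα, ⟨Or.inl rfl, Or.inl rfl⟩, rrel_of_dom_eq hα hβ hdom⟩


end POPIpaper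
end
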